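/- In the scaled one-step NormalHedge setting, suppose the set I₂ = {i : R_i > 0} is nonempty, the average potential satisfies Ψ = (1/N)·Σ_{i=1}^N Φ(R_i) < 2.32, and (1/|I₂|)·Σ_{i∈I₂} Φ(R_i) ≥ B for some real B ≥ 1. Then Σ_{i∈I₂} (Φ(R'_i) − Φ(R_i)) ≤ α·|I₂|·B·(2/3 − (4/5)·ln B). -/

import Mathlib

open Finset intervalIntegral

/-- The NormalHedge potential function: `Φ(x) = exp(x²/8)` for `x > 0`, `1` for `x ≤ 0`. -/
noncomputable def Phi (x : ℝ) : ℝ := if 0 < x then Real.exp (x ^ 2 / 8) else 1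

/-- Derivative of the potential: `Φ'(x) = (x/4)·exp(x²/8)` for `x > 0`, `0` for `x ≤ 0`. -/
noncomputable def Phi' (x : ℝ) : ℝ := if 0 < x then (x / 4) * Real.exp (x ^ 2 / 8) else 0

lemma Phi_eq (x : ℝ) : Phi x = Real.exp ((max x 0) ^ 2 / 8) := by
  unfold Phi
  rcases lt_or_ge 0 x with h | h
  · rw [if_pos h, max_eq_left h.le]
  · rw [if_neg (not_lt.mpr h), max_eq_right h]; simp

lemma Phi'_eq (x : ℝ) : Phi' x = (max x 0) / 4 * Real.exp ((max x 0) ^ 2 / 8) := by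
  unfold Phi'
  rcases lt_or_ge 0 x with h | h
  · rw [if_pos h, max_eq_left h.le]
  · rw [if_neg (not_lt.mpr h), max_eq_right h]; simp

lemma hasDerivAt_q (x : ℝ) : HasDerivAt (fun y => (max y 0) ^ 2 / 8) ((max x 0) / 4) x := by
  rcases lt_trichotomy x 0 with h | h | h
  · have he : (fun y => (max y 0 : ℝ) ^ 2 / 8) =ᶠ[nhds x] (fun _ => 0) := by
      filter_upwards [eventually_lt_nhds h] with y hy
      rw [max_eq_right hy.le]; norm_num
    rw [max_eq_right h.le]
    simpa using (hasDerivAt_const x (0:ℝ)).congr_of_eventuallyEq he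
  · subst h
    rw [max_self]
    rw [hasDerivAt_iff_tendsto_slope]
    have hb : ∀ y : ℝ, |slope (fun y => (max y 0 : ℝ) ^ 2 / 8) 0 y| ≤ |y| / 8 := by
      intro y
      rcases eq_or_ne y 0 with rfl | hy
      · simp [slope]
      · have h0 : |y| ≠ 0 := abs_ne_zero.mpr hy
        rw [slope_def_field]
        have h1 : ((max y 0 : ℝ) ^ 2 / 8 - max (0:ℝ) 0 ^ 2 / 8) / (y - 0)
            = ((max y 0) ^ 2 / 8) / y := by simp
        rw [h1, abs_div, abs_div]
        rw [abs_of_nonneg (sq_nonneg (max y 0)), abs_of_pos (by norm_num : (0:ℝ) < 8)]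
        have h2 : (max y 0 : ℝ) ^ 2 ≤ |y| ^ 2 := by
          rcases le_or_gt y 0 with h | h
          · rw [max_eq_right h]; simpa using sq_nonneg |y|
          · rw [max_eq_left h.le, abs_of_pos h]
        rw [div_le_div_iff₀ (abs_pos.mpr hy) (by norm_num : (0:ℝ) < 8)]
        nlinarith [h2, sq_nonneg (|y|)]
    have htend : Filter.Tendsto (fun y : ℝ => |y| / 8) (nhdsWithin 0 {(0:ℝ)}ᶜ) (nhds 0) := by
      have : Filter.Tendsto (fun y : ℝ => |y| / 8) (nhds 0) (nhds 0) := by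
        have := (continuous_abs.div_const 8).tendsto (0:ℝ)
        simpa using this
      exact this.mono_left nhdsWithin_le_nhds
    have : (0:ℝ)/4 = 0 := by norm_num
    rw [this]
    exact squeeze_zero_norm hb htend
  · have he : (fun y => (max y 0 : ℝ) ^ 2 / 8) =ᶠ[nhds x] (fun y => y ^ 2 / 8) := by
      filter_upwards [eventually_gt_nhds h] with y hy
      rw [max_eq_left hy.le]
    rw [max_eq_left h.le]
    have hd : HasDerivAt (fun y : ℝ => y ^ 2 / 8) (x / 4) x := by
      have := (hasDerivAt_pow 2 x).div_const 8
      exact this.congr_deriv (by simp; ring)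
    exact hd.congr_of_eventuallyEq he

lemma hasDerivAt_Phi (x : ℝ) : HasDerivAt Phi (Phi' x) x := by
  have h1 := (Real.hasDerivAt_exp ((max x 0)^2/8)).comp x (hasDerivAt_q x)
  have he : Phi = fun y => Real.exp ((max y 0)^2/8) := funext Phi_eq
  rw [he, Phi'_eq]
  exact h1.congr_deriv (by ring)

lemma continuous_Phi' : Continuous Phi' := by
  have he : Phi' = fun y => (max y 0) / 4 * Real.exp ((max y 0)^2/8) := funext Phi'_eq
  rw [he]; fun_prop

lemma hasDerivAt_h (t : ℝ) :
    HasDerivAt (fun s : ℝ => s/4 * Real.exp (s^2/8)) ((1/4 + t^2/16) * Real.exp (t^2/8)) t := by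
  have h2 : HasDerivAt (fun s : ℝ => s^2/8) (t/4) t := by
    have := (hasDerivAt_pow 2 t).div_const 8
    exact this.congr_deriv (by simp; ring)
  have h3 := (Real.hasDerivAt_exp (t^2/8)).comp t h2
  have h4 := ((hasDerivAt_id t).div_const 4).mul h3
  exact h4.congr_deriv (by simp [Function.comp]; ring)

lemma Phi'_lip {D M : ℝ} (hM : ∀ t ∈ Set.Icc (0:ℝ) D, (1/4 + t^2/16) * Real.exp (t^2/8) ≤ M)
    {x y : ℝ} (hx : x ∈ Set.Icc (-D) D) (hy : y ∈ Set.Icc (-D) D) :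
    |Phi' x - Phi' y| ≤ M * |x - y| := by
  have hD : (0:ℝ) ≤ D := by linarith [hx.1, hx.2]
  have hM0 : (0:ℝ) ≤ M := le_trans (by positivity) (hM 0 ⟨le_refl _, hD⟩)
  have key : ∀ u ∈ Set.Icc (0:ℝ) D, ∀ v ∈ Set.Icc (0:ℝ) D,
      ‖(fun s : ℝ => s/4 * Real.exp (s^2/8)) v - (fun s : ℝ => s/4 * Real.exp (s^2/8)) u‖
        ≤ M * ‖v - u‖ := by
    intro u hu v hv
    exact (convex_Icc 0 D).norm_image_sub_le_of_norm_hasDerivWithin_le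
      (fun t _ => (hasDerivAt_h t).hasDerivWithinAt)
      (fun t ht => by
        rw [Real.norm_eq_abs, abs_of_nonneg (by positivity)]; exact hM t ht) hu hv
  have hx' : max x 0 ∈ Set.Icc (0:ℝ) D := ⟨le_max_right _ _, max_le hx.2 hD⟩
  have hy' : max y 0 ∈ Set.Icc (0:ℝ) D := ⟨le_max_right _ _, max_le hy.2 hD⟩
  have heq : Phi' x - Phi' y
      = (fun s : ℝ => s/4 * Real.exp (s^2/8)) (max x 0) - (fun s : ℝ => s/4 * Real.exp (s^2/8)) (max y 0) := by
    rw [Phi'_eq, Phi'_eq]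
  rw [heq]
  calc |(fun s : ℝ => s/4 * Real.exp (s^2/8)) (max x 0) - (fun s : ℝ => s/4 * Real.exp (s^2/8)) (max y 0)|
      ≤ M * |max x 0 - max y 0| := key _ hy' _ hx'
    _ ≤ M * |x - y| := by
        exact mul_le_mul_of_nonneg_left (abs_max_sub_max_le_abs x y 0) hM0

lemma integral_lin (c d e : ℝ) : ∫ t in c..d, (t - e) = (d^2 - c^2)/2 - e*(d - c) := by
  rw [integral_sub intervalIntegrable_id intervalIntegrable_const, integral_id, integral_const]
  simp
  ring

lemma taylor_bound {a b M : ℝ} (hM : 0 ≤ M)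
    (hLip : ∀ t ∈ Set.uIcc a b, |Phi' t - Phi' a| ≤ M * |t - a|) :
    Phi b - Phi a ≤ Phi' a * (b - a) + M/2 * (b - a)^2 := by
  have hftc : ∫ t in a..b, Phi' t = Phi b - Phi a :=
    intervalIntegral.integral_eq_sub_of_hasDerivAt (fun t _ => hasDerivAt_Phi t)
      (continuous_Phi'.intervalIntegrable a b)
  have hint : IntervalIntegrable Phi' MeasureTheory.volume a b :=
    continuous_Phi'.intervalIntegrable a b
  rcases le_total a b with hab | hab
  · have h1 : ∀ t ∈ Set.Icc a b, Phi' t ≤ Phi' a + M * (t - a) := by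
      intro t ht
      have hl := hLip t (by rwa [Set.uIcc_of_le hab])
      have h2 : Phi' t - Phi' a ≤ M * |t - a| := (abs_le.mp hl).2
      have h3 : |t - a| = t - a := abs_of_nonneg (by linarith [ht.1])
      rw [h3] at h2; linarith
    have hmono : ∫ t in a..b, Phi' t ≤ ∫ t in a..b, (Phi' a + M * (t - a)) := by
      apply integral_mono_on hab hint
      · exact ((by fun_prop : Continuous (fun t : ℝ => Phi' a + M * (t - a)))).intervalIntegrable a b
      · exact h1
    have hcalc : ∫ t in a..b, (Phi' a + M * (t - a)) = Phi' a * (b - a) + M/2 * (b - a)^2 := by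
      rw [integral_add intervalIntegrable_const
        ((by fun_prop : Continuous (fun t : ℝ => M * (t - a))).intervalIntegrable a b)]
      rw [integral_const_mul, integral_lin, integral_const]
      simp; ring
    rw [← hftc]; rw [hcalc] at hmono; exact hmono
  · have h1 : ∀ t ∈ Set.Icc b a, Phi' a - M * (a - t) ≤ Phi' t := by
      intro t ht
      have hl := hLip t (by rwa [Set.uIcc_of_ge hab])
      have h2 : -(M * |t - a|) ≤ Phi' t - Phi' a := (abs_le.mp hl).1
      have h3 : |t - a| = a - t := by rw [abs_sub_comm]; exact abs_of_nonneg (by linarith [ht.2])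
      rw [h3] at h2; linarith
    have hmono : ∫ t in b..a, (Phi' a - M * (a - t)) ≤ ∫ t in b..a, Phi' t := by
      apply integral_mono_on hab _ (continuous_Phi'.intervalIntegrable b a) h1
      exact ((by fun_prop : Continuous (fun t : ℝ => Phi' a - M * (a - t)))).intervalIntegrable b a
    have hcalc : ∫ t in b..a, (Phi' a - M * (a - t)) = Phi' a * (a - b) - M/2 * (a - b)^2 := by
      rw [integral_sub intervalIntegrable_const
        ((by fun_prop : Continuous (fun t : ℝ => M * (a - t))).intervalIntegrable b a)]
      rw [integral_const_mul, integral_const]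
      have : ∫ t in b..a, (a - t) = -((a^2 - b^2)/2 - a*(a - b)) := by
        have h5 : ∀ t : ℝ, a - t = -(t - a) := fun t => by ring
        rw [integral_congr (g := fun t => -(t - a)) (fun t _ => h5 t)]
        rw [integral_neg, integral_lin]
      rw [this]; simp; ring
    have hswap : ∫ t in a..b, Phi' t = -∫ t in b..a, Phi' t := (integral_symm b a)
    rw [← hftc, hswap]
    rw [hcalc] at hmono
    nlinarith [hmono]

lemma concave_F : ConcaveOn ℝ (Set.Ici (0:ℝ)) (fun y => 2/3 * y - 4/5 * (y * Real.log y)) := by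
  have c1 : ConvexOn ℝ (Set.Ici (0:ℝ)) (fun y => (4:ℝ)/5 * (y * Real.log y)) := by
    have := Real.convexOn_mul_log.smul (c := (4:ℝ)/5) (by norm_num)
    simpa [smul_eq_mul] using this
  have c2 : ConcaveOn ℝ (Set.Ici (0:ℝ)) (fun y : ℝ => (2:ℝ)/3 * y) := by
    have : ConcaveOn ℝ (Set.Ici (0:ℝ)) (fun y : ℝ => y) := (concaveOn_id (convex_Ici 0))
    have := this.smul (c := (2:ℝ)/3) (by norm_num)
    simpa [smul_eq_mul] using this
  exact c2.sub c1

lemma antitone_F : AntitoneOn (fun y => 2/3 * y - 4/5 * (y * Real.log y)) (Set.Ici (1:ℝ)) := by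
  apply antitoneOn_of_deriv_nonpos (convex_Ici 1)
  · apply ContinuousOn.sub
    · exact continuousOn_const.mul continuousOn_id
    · exact continuousOn_const.mul (continuousOn_id.mul
        (Real.continuousOn_log.mono (fun x hx => by
          simp only [Set.mem_Ici] at hx; simp; intro h; simp [h] at hx; linarith)))
  · intro y hy
    rw [interior_Ici] at hy
    have hy1 : (1:ℝ) < y := hy
    have hd : HasDerivAt (fun y => 2/3 * y - 4/5 * (y * Real.log y))
        (2/3 - 4/5 * (Real.log y + 1)) y := by
      have h1 := Real.hasDerivAt_mul_log (by linarith : y ≠ 0)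
      have h2 := ((hasDerivAt_id y).const_mul ((2:ℝ)/3)).sub (h1.const_mul ((4:ℝ)/5))
      exact h2.congr_deriv (by ring)
    exact (hd.differentiableAt.differentiableWithinAt)
  · intro y hy
    rw [interior_Ici] at hy
    have hy1 : (1:ℝ) < y := hy
    have hd : HasDerivAt (fun y => 2/3 * y - 4/5 * (y * Real.log y))
        (2/3 - 4/5 * (Real.log y + 1)) y := by
      have h1 := Real.hasDerivAt_mul_log (by linarith : y ≠ 0)
      have h2 := ((hasDerivAt_id y).const_mul ((2:ℝ)/3)).sub (h1.const_mul ((4:ℝ)/5))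
      exact h2.congr_deriv (by ring)
    rw [hd.deriv]
    have : (0:ℝ) ≤ Real.log y := Real.log_nonneg (by linarith)
    linarith

lemma jensen_step {ι : Type*} (t : Finset ι) (ht : t.Nonempty) (y : ι → ℝ)
    (hy : ∀ i ∈ t, 1 ≤ y i) (B : ℝ) (hB : 1 ≤ B)
    (havg : B ≤ (1/(t.card:ℝ)) * ∑ i ∈ t, y i) :
    ∑ i ∈ t, (2/3 * y i - 4/5 * (y i * Real.log (y i)))
      ≤ (t.card:ℝ) * (2/3 * B - 4/5 * (B * Real.log B)) := by
  set F := fun y : ℝ => 2/3 * y - 4/5 * (y * Real.log y) with hF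
  have hn : (0:ℝ) < t.card := by exact_mod_cast card_pos.mpr ht
  set m := (∑ i ∈ t, y i) / t.card with hm
  have hjen : ∑ i ∈ t, (1/(t.card:ℝ)) • F (y i) ≤ F (∑ i ∈ t, (1/(t.card:ℝ)) • y i) := by
    apply concave_F.le_map_sum
    · intro i _; positivity
    · rw [sum_const, nsmul_eq_mul]; field_simp
    · intro i hi; exact Set.mem_Ici.mpr (by linarith [hy i hi])
  have h1 : ∑ i ∈ t, (1/(t.card:ℝ)) • y i = m := by
    simp only [smul_eq_mul, ← Finset.mul_sum, hm]
    ring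
  have h2 : ∑ i ∈ t, (1/(t.card:ℝ)) • F (y i) = (1/(t.card:ℝ)) * ∑ i ∈ t, F (y i) := by
    simp only [smul_eq_mul, ← Finset.mul_sum]
  rw [h1, h2] at hjen
  have hmB : B ≤ m := by rw [hm]; rw [div_eq_mul_inv] at *; linarith [havg]
  have hFm : F m ≤ F B :=
    antitone_F (Set.mem_Ici.mpr hB) (Set.mem_Ici.mpr (le_trans hB hmB)) hmB
  have hfin : (1/(t.card:ℝ)) * ∑ i ∈ t, F (y i) ≤ F B := le_trans hjen hFm
  have := mul_le_mul_of_nonneg_left hfin hn.le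
  calc ∑ i ∈ t, F (y i) = (t.card:ℝ) * ((1/(t.card:ℝ)) * ∑ i ∈ t, F (y i)) := by
        field_simp
    _ ≤ (t.card:ℝ) * F B := this

lemma exp_small : Real.exp (43/800) ≤ 800/757 := by
  have h := Real.add_one_le_exp (-(43/800) : ℝ)
  have hpos : (0:ℝ) < Real.exp (-(43/800)) := Real.exp_pos _
  have h2 : Real.exp (43/800) * Real.exp (-(43/800)) = 1 := by
    rw [← Real.exp_add]; norm_num
  nlinarith [Real.exp_pos (43/800 : ℝ)]

set_option maxHeartbeats 2000000 in
lemma per_term {α a b gdiff : ℝ} (hα0 : 0 < α) (hα640 : α ≤ 1/640) (ha : 0 < a)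
    (hsa : Real.sqrt α * a ≤ 1/10)
    (hb : b = a - α * a + gdiff) (hgd : |gdiff| ≤ 2 * Real.sqrt α) :
    Phi b - Phi a ≤ Phi' a * gdiff
      + α * (2/3 * Phi a - 4/5 * (Phi a * Real.log (Phi a))) := by
  have hq0 : (0:ℝ) ≤ Real.sqrt α := Real.sqrt_nonneg α
  have hq2 : Real.sqrt α ^ 2 = α := Real.sq_sqrt hα0.le
  have hPa : Phi a = Real.exp (a^2/8) := by rw [Phi, if_pos ha]
  have hP'a : Phi' a = a/4 * Real.exp (a^2/8) := by rw [Phi', if_pos ha]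
  have hlog : Real.log (Phi a) = a^2/8 := by rw [hPa, Real.log_exp]
  have hK : Real.exp (43/800) ≤ 800/757 := exp_small
  have hK0 : (0:ℝ) < Real.exp (43/800) := Real.exp_pos _
  have hEa0 : (0:ℝ) < Real.exp (a^2/8) := Real.exp_pos _
  have hexpadd : Real.exp ((a^2 + 43/100)/8) = Real.exp (43/800) * Real.exp (a^2/8) := by
    rw [← Real.exp_add]; ring_nf
  generalize hqq : Real.sqrt α = q at hq0 hq2 hsa hgd
  have hαa : α * a ≤ q * (1/10) := by nlinarith
  have hΔ : |b - a| ≤ 21/10 * q := by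
    have h1 : b - a = -(α * a) + gdiff := by rw [hb]; ring
    rw [h1]
    calc |-(α * a) + gdiff| ≤ |-(α * a)| + |gdiff| := abs_add_le _ _
      _ = α * a + |gdiff| := by rw [abs_neg, abs_of_nonneg (by positivity)]
      _ ≤ q * (1/10) + 2 * q := by linarith
      _ = 21/10 * q := by ring
  have hΔ' := abs_le.mp hΔ
  have hΔsq : (b - a)^2 ≤ 441/100 * α := by
    nlinarith [sq_abs (b - a), abs_nonneg (b - a)]
  have hE0 : 0 < a + 21/10 * q := by positivity
  have hE2 : (a + 21/10 * q)^2 ≤ a^2 + 43/100 := by nlinarith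
  have hsub : Set.uIcc a b ⊆ Set.Icc (-(a + 21/10 * q)) (a + 21/10 * q) := by
    rw [Set.uIcc_eq_union]
    apply Set.union_subset <;> apply Set.Icc_subset_Icc <;> linarith
  have hMbound : ∀ t ∈ Set.Icc (0:ℝ) (a + 21/10 * q),
      (1/4 + t^2/16) * Real.exp (t^2/8)
        ≤ (1/4 + (a^2+43/100)/16) * (Real.exp (43/800) * Real.exp (a^2/8)) := by
    intro t ht
    have ht2 : t^2 ≤ a^2 + 43/100 := by nlinarith [ht.1, ht.2]
    have hexp : Real.exp (t^2/8) ≤ Real.exp (43/800) * Real.exp (a^2/8) := by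
      rw [← hexpadd]
      apply Real.exp_le_exp.mpr
      linarith
    apply mul_le_mul _ hexp (Real.exp_pos _).le _
    · linarith
    · positivity
  have hM0 : (0:ℝ) ≤ (1/4 + (a^2+43/100)/16) * (Real.exp (43/800) * Real.exp (a^2/8)) := by
    positivity
  have hLip : ∀ t ∈ Set.uIcc a b, |Phi' t - Phi' a| ≤
      (1/4 + (a^2+43/100)/16) * (Real.exp (43/800) * Real.exp (a^2/8)) * |t - a| := by
    intro t ht
    exact Phi'_lip hMbound (hsub ht) (hsub Set.left_mem_uIcc)
  have htay := taylor_bound hM0 hLip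
  have hnum : (1/4 + (a^2+43/100)/16) * (Real.exp (43/800) * Real.exp (a^2/8)) / 2 * (441/100 * α)
      ≤ α * Real.exp (a^2/8) * (2/3 + 3/20 * a^2) := by
    have h2 : (1/4 + (a^2+43/100)/16) * (800/757) * (441/200) ≤ 2/3 + 3/20 * a^2 := by
      nlinarith [sq_nonneg a]
    have h3 : (1/4 + (a^2+43/100)/16) * Real.exp (43/800) * (441/200)
        ≤ 2/3 + 3/20 * a^2 := by nlinarith [sq_nonneg a]
    calc (1/4 + (a^2+43/100)/16) * (Real.exp (43/800) * Real.exp (a^2/8)) / 2 * (441/100 * α)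
        = ((1/4 + (a^2+43/100)/16) * Real.exp (43/800) * (441/200)) * (α * Real.exp (a^2/8)) := by
          ring
      _ ≤ (2/3 + 3/20 * a^2) * (α * Real.exp (a^2/8)) :=
          mul_le_mul_of_nonneg_right h3 (by positivity)
      _ = α * Real.exp (a^2/8) * (2/3 + 3/20 * a^2) := by ring
  have hsec : (1/4 + (a^2+43/100)/16) * (Real.exp (43/800) * Real.exp (a^2/8)) / 2 * (b - a)^2
      ≤ α * Real.exp (a^2/8) * (2/3 + 3/20 * a^2) := by
    refine le_trans (mul_le_mul_of_nonneg_left hΔsq (by positivity)) hnum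
  have hfirst : Phi' a * (b - a) = Phi' a * gdiff - α * (a^2/4 * Real.exp (a^2/8)) := by
    rw [hb, hP'a]; ring
  have hgoal2 : α * Real.exp (a^2/8) * (2/3 + 3/20 * a^2) - α * (a^2/4 * Real.exp (a^2/8))
      = α * (2/3 * Phi a - 4/5 * (Phi a * Real.log (Phi a))) := by
    rw [hlog, hPa]; ring
  linarith [htay, hsec]

lemma Phi_ge_one (x : ℝ) : 1 ≤ Phi x := by
  rw [Phi]; split
  · exact Real.one_le_exp (by positivity)
  · exact le_rfl
lemma Phi'_nonneg (x : ℝ) : 0 ≤ Phi' x := by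
  rw [Phi']; split
  · positivity
  · exact le_rfl

lemma exp_45_le : Real.exp ((4:ℝ)/5) ≤ 2.32 := by
  have h5 : Real.exp ((4:ℝ)/5)^(5:ℕ) = Real.exp 4 := by
    rw [← Real.exp_nat_mul]; norm_num
  have h4 : Real.exp (4:ℝ) = (Real.exp 1)^(4:ℕ) := by
    rw [← Real.exp_nat_mul]; norm_num
  have he := Real.exp_one_lt_d9
  have hlt : Real.exp ((4:ℝ)/5)^(5:ℕ) < (2.32:ℝ)^(5:ℕ) := by
    rw [h5, h4]
    calc (Real.exp 1)^(4:ℕ) < (2.7182818286:ℝ)^(4:ℕ) := by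
          exact pow_lt_pow_left₀ he (Real.exp_pos 1).le (by norm_num)
      _ < (2.32:ℝ)^(5:ℕ) := by norm_num
  exact (lt_of_pow_lt_pow_left₀ 5 (by norm_num) hlt).le

/-- if the actions with positive regret have average potential at least
`B ≥ 1` and the overall average potential is below 2.32, then the total potential change
over those actions after one scaled NormalHedge update is at most
`α·|I₂|·B·(2/3 - (4/5)·ln B)`. -/
theorem normalHedge_positive_regret_total_step_bound

    (N : ℕ) (hN : 1 ≤ N)
    (α : ℝ) (hα0 : 0 < α) (hα : α < 1 / (800 * Real.log (2.32 * N)))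
    (R g : Fin N → ℝ) (hg : ∀ i, |g i| ≤ Real.sqrt α)
    (p : Fin N → ℝ)
    (hp : ∀ i, p i =
      if 0 < ∑ k, Phi' (R k) then Phi' (R i) / ∑ k, Phi' (R k) else 1 / N)
    (gA : ℝ) (hgA : gA = ∑ i, p i * g i)
    (R' : Fin N → ℝ) (hR' : ∀ i, R' i = (1 - α) * R i + g i - gA)
    (I₂ : Finset (Fin N)) (hI₂ : ∀ i, i ∈ I₂ ↔ 0 < R i) (hne : I₂.Nonempty)
    (hΨ : (1 / (N : ℝ)) * ∑ i, Phi (R i) < 2.32)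
    (B : ℝ) (hB : 1 ≤ B)
    (hB2 : (1 / (I₂.card : ℝ)) * ∑ i ∈ I₂, Phi (R i) ≥ B) :
    ∑ i ∈ I₂, (Phi (R' i) - Phi (R i)) ≤
      α * I₂.card * B * (2 / 3 - (4 / 5) * Real.log B) := by
  have hN0 : (0:ℝ) < N := by exact_mod_cast hN
  have hN1 : (1:ℝ) ≤ N := by exact_mod_cast hN
  have h232 : (0:ℝ) < 2.32 * N := by positivity
  set L := Real.log (2.32 * N) with hLdef
  have hL : (4:ℝ)/5 ≤ L := by
    have h1 : (2.32:ℝ) ≤ 2.32 * N := by nlinarith [hN1]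
    calc (4:ℝ)/5 ≤ Real.log 2.32 := (Real.le_log_iff_exp_le (by norm_num)).mpr exp_45_le
      _ ≤ L := Real.log_le_log (by norm_num) h1
  have hLpos : (0:ℝ) < L := lt_of_lt_of_le (by norm_num) hL
  have hαL : α * L < 1/800 := by
    calc α * L < (1/(800*L)) * L := mul_lt_mul_of_pos_right hα hLpos
      _ = 1/800 := by field_simp
  have hα640 : α ≤ 1/640 := by
    have h800 : (640:ℝ) ≤ 800 * L := by linarith
    have h1 : α * 640 ≤ α * (800 * L) := mul_le_mul_of_nonneg_left h800 hα0.le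
    nlinarith
  -- positivity of S
  obtain ⟨i0, hi0⟩ := hne
  have hRi0 : 0 < R i0 := (hI₂ i0).mp hi0
  have hS : 0 < ∑ k, Phi' (R k) := by
    apply Finset.sum_pos' (fun i _ => Phi'_nonneg _)
    refine ⟨i0, Finset.mem_univ _, ?_⟩
    rw [Phi', if_pos hRi0]; positivity
  have hSne : (∑ k, Phi' (R k)) ≠ 0 := ne_of_gt hS
  have hp' : ∀ i, p i = Phi' (R i) / ∑ k, Phi' (R k) := fun i => by
    rw [hp i, if_pos hS]
  have hpnn : ∀ i, 0 ≤ p i := fun i => by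
    rw [hp' i]; exact div_nonneg (Phi'_nonneg _) hS.le
  have hpsum : ∑ i, p i = 1 := by
    simp_rw [hp']
    rw [← Finset.sum_div, div_self hSne]
  have hgAb : |gA| ≤ Real.sqrt α := by
    rw [hgA]
    calc |∑ i, p i * g i| ≤ ∑ i, |p i * g i| := Finset.abs_sum_le_sum_abs _ _
      _ ≤ ∑ i, p i * Real.sqrt α := by
          apply Finset.sum_le_sum
          intro i _
          rw [abs_mul, abs_of_nonneg (hpnn i)]
          exact mul_le_mul_of_nonneg_left (hg i) (hpnn i)
      _ = Real.sqrt α := by rw [← Finset.sum_mul, hpsum, one_mul]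
  -- sum of potentials bound
  have hsumPhi : ∑ i, Phi (R i) < 2.32 * N := by
    have h1 := mul_lt_mul_of_pos_left hΨ hN0
    have h2 : (N:ℝ) * ((1/(N:ℝ)) * ∑ i, Phi (R i)) = ∑ i, Phi (R i) := by
      field_simp
    rw [h2] at h1; linarith
  -- per-term bound
  have hper : ∀ i ∈ I₂, Phi (R' i) - Phi (R i) ≤ Phi' (R i) * (g i - gA)
      + α * (2/3 * Phi (R i) - 4/5 * (Phi (R i) * Real.log (Phi (R i)))) := by
    intro i hi
    have hai : 0 < R i := (hI₂ i).mp hi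
    have hPhii : Phi (R i) ≤ ∑ j, Phi (R j) :=
      Finset.single_le_sum (fun j _ => le_trans zero_le_one (Phi_ge_one _)) (Finset.mem_univ i)
    have hRia : (R i)^2 < 8 * L := by
      have h1 : Real.exp ((R i)^2/8) < 2.32 * N := by
        rw [Phi, if_pos hai] at hPhii; linarith
      have h2 : Real.exp ((R i)^2/8) < Real.exp L := by
        rw [hLdef, Real.exp_log h232]; exact h1
      have := Real.exp_lt_exp.mp h2
      linarith
    have hsa : Real.sqrt α * R i ≤ 1/10 := by
      have hq2 : Real.sqrt α ^ 2 = α := Real.sq_sqrt hα0.le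
      have hq0 : 0 ≤ Real.sqrt α := Real.sqrt_nonneg α
      have hu2 : (Real.sqrt α * R i)^2 < 8 * (α * L) := by
        have : (Real.sqrt α * R i)^2 = α * (R i)^2 := by rw [mul_pow, hq2]
        rw [this]
        calc α * (R i)^2 < α * (8 * L) := by
              exact mul_lt_mul_of_pos_left hRia hα0
          _ = 8 * (α * L) := by ring
      nlinarith [mul_nonneg hq0 hai.le]
    have hgd : |g i - gA| ≤ 2 * Real.sqrt α := by
      calc |g i - gA| ≤ |g i| + |gA| := abs_sub _ _
        _ ≤ 2 * Real.sqrt α := by linarith [hg i, hgAb]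
    have hb : R' i = R i - α * R i + (g i - gA) := by rw [hR' i]; ring
    exact per_term hα0 hα640 hai hsa hb hgd
  -- cross term zero
  have hzero : ∑ i ∈ I₂, Phi' (R i) * (g i - gA) = 0 := by
    have hext : ∑ i ∈ I₂, Phi' (R i) * (g i - gA) = ∑ i, Phi' (R i) * (g i - gA) := by
      apply Finset.sum_subset (Finset.subset_univ _)
      intro x _ hx
      have hx' : ¬ 0 < R x := fun h => hx ((hI₂ x).mpr h)
      rw [Phi', if_neg hx', zero_mul]
    have hSgA : (∑ k, Phi' (R k)) * gA = ∑ i, Phi' (R i) * g i := by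
      rw [hgA, Finset.mul_sum]
      apply Finset.sum_congr rfl
      intro i _
      rw [hp' i]
      field_simp
    rw [hext]
    have : ∑ i, Phi' (R i) * (g i - gA)
        = (∑ i, Phi' (R i) * g i) - (∑ k, Phi' (R k)) * gA := by
      rw [Finset.sum_mul]
      rw [← Finset.sum_sub_distrib]
      apply Finset.sum_congr rfl
      intro i _
      ring
    rw [this, hSgA, sub_self]
  -- assemble
  have hsum1 : ∑ i ∈ I₂, (Phi (R' i) - Phi (R i))
      ≤ ∑ i ∈ I₂, Phi' (R i) * (g i - gA)
        + α * ∑ i ∈ I₂, (2/3 * Phi (R i) - 4/5 * (Phi (R i) * Real.log (Phi (R i)))) := by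
    rw [Finset.mul_sum, ← Finset.sum_add_distrib]
    exact Finset.sum_le_sum hper
  have hjen := jensen_step I₂ ⟨i0, hi0⟩ (fun i => Phi (R i))
    (fun i _ => Phi_ge_one _) B hB hB2
  have hαnn : (0:ℝ) ≤ α := hα0.le
  calc ∑ i ∈ I₂, (Phi (R' i) - Phi (R i))
      ≤ ∑ i ∈ I₂, Phi' (R i) * (g i - gA)
        + α * ∑ i ∈ I₂, (2/3 * Phi (R i) - 4/5 * (Phi (R i) * Real.log (Phi (R i)))) := hsum1
    _ = α * ∑ i ∈ I₂, (2/3 * Phi (R i) - 4/5 * (Phi (R i) * Real.log (Phi (R i)))) := by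
        rw [hzero, zero_add]
    _ ≤ α * ((I₂.card:ℝ) * (2/3 * B - 4/5 * (B * Real.log B))) :=
        mul_le_mul_of_nonneg_left hjen hαnn
    _ = α * I₂.card * B * (2 / 3 - (4 / 5) * Real.log B) := by ring
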